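/- arXiv:2605.12914 — 4 statements merged into one kernel-verified Lean document; each statement's English description precedes it below -/
import Mathlib

section
/- Fix real numbers ν₀ > 0 and ρ > 0 and define L(m) := (16/ν₀)^m · ρ^{m+1} · (m+2)² / m! for m ∈ ℕ. Then there exists a constant C > 0 such that for every m ∈ ℕ: ∑_{j=0}^{m} choose(m,j) · L(m) / (L(j)·L(m−j)) ≤ C. -/
lemma gevrey_term_eq (A ρ : ℝ) (hA : 0 < A) (hρ : 0 < ρ) (j k : ℕ) :
    ((j + k).choose j : ℝ) *
      (A ^ (j + k) * ρ ^ (j + k + 1) * (((j + k : ℕ) : ℝ) + 2) ^ 2 /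
        (Nat.factorial (j + k) : ℝ)) /
      ((A ^ j * ρ ^ (j + 1) * ((j : ℝ) + 2) ^ 2 / (Nat.factorial j : ℝ)) *
        (A ^ k * ρ ^ (k + 1) * ((k : ℝ) + 2) ^ 2 / (Nat.factorial k : ℝ)))
    = (((j + k : ℕ) : ℝ) + 2) ^ 2 / (ρ * ((j : ℝ) + 2) ^ 2 * ((k : ℝ) + 2) ^ 2) := by
  have hc : ((j + k).choose j : ℝ) * (Nat.factorial j : ℝ) * (Nat.factorial k : ℝ)
      = (Nat.factorial (j + k) : ℝ) := by
    have := Nat.choose_mul_factorial_mul_factorial (Nat.le_add_right j k)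
    rw [Nat.add_sub_cancel_left] at this
    exact_mod_cast this
  have hfj : (Nat.factorial j : ℝ) ≠ 0 := by positivity
  have hfk : (Nat.factorial k : ℝ) ≠ 0 := by positivity
  have hfm : (Nat.factorial (j + k) : ℝ) ≠ 0 := by positivity
  have hAjk : A ^ (j + k) = A ^ j * A ^ k := pow_add A j k
  have hrjk : ρ ^ (j + k + 1) * ρ = ρ ^ (j + 1) * ρ ^ (k + 1) := by
    rw [← pow_succ, ← pow_add]; ring_nf
  have hj2 : ((j : ℝ) + 2) ≠ 0 := by positivity
  have hk2 : ((k : ℝ) + 2) ≠ 0 := by positivity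
  field_simp
  rw [hAjk]
  linear_combination (A ^ j * A ^ k) * (((j + k).choose j : ℝ) * (Nat.factorial j : ℝ) *
      (Nat.factorial k : ℝ) * hrjk + ρ ^ (j + 1) * ρ ^ (k + 1) * hc)

lemma inv_sq_sum_le_one (m : ℕ) :
    ∑ j ∈ Finset.range (m + 1), (1 : ℝ) / ((j : ℝ) + 2) ^ 2 ≤ 1 := by
  have h1 : ∀ j ∈ Finset.range (m + 1),
      (1 : ℝ) / ((j : ℝ) + 2) ^ 2 ≤ 1 / ((j : ℝ) + 1) - 1 / ((j : ℝ) + 2) := by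
    intro j _
    have hx : (0 : ℝ) ≤ (j : ℝ) := by positivity
    rw [div_sub_div _ _ (by linarith) (by linarith),
      div_le_div_iff₀ (by positivity) (by positivity)]
    nlinarith
  calc ∑ j ∈ Finset.range (m + 1), (1 : ℝ) / ((j : ℝ) + 2) ^ 2
      ≤ ∑ j ∈ Finset.range (m + 1), (1 / ((j : ℝ) + 1) - 1 / ((j : ℝ) + 2)) :=
        Finset.sum_le_sum h1
    _ = (fun j : ℕ => 1 / ((j : ℝ) + 1)) 0 - (fun j : ℕ => 1 / ((j : ℝ) + 1)) (m + 1) := by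
        rw [← Finset.sum_range_sub' (fun j : ℕ => 1 / ((j : ℝ) + 1)) (m + 1)]
        refine Finset.sum_congr rfl fun j _ => ?_
        push_cast
        ring
    _ ≤ 1 := by
        simp only [Nat.cast_zero, Nat.cast_add, Nat.cast_one]
        have h' : (0 : ℝ) ≤ 1 / ((m : ℝ) + 1 + 1) := by positivity
        norm_num
        linarith

/-- For fixed `ν₀ > 0`, `ρ > 0` and the Gevrey weight
`L(m) = (16/ν₀)^m · ρ^{m+1} · (m+2)²/m!`, there is a constant `C > 0` such that
`∑_{j=0}^{m} choose(m,j) · L(m)/(L(j)·L(m−j)) ≤ C` for all `m`. -/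
theorem sum_binomial_gevrey_weight_bound (ν₀ ρ : ℝ) (hν₀ : 0 < ν₀) (hρ : 0 < ρ)
    (L : ℕ → ℝ)
    (hL : ∀ m : ℕ, L m = (16 / ν₀) ^ m * ρ ^ (m + 1) * ((m : ℝ) + 2) ^ 2 /
      (Nat.factorial m : ℝ)) :
    ∃ C > (0 : ℝ), ∀ m : ℕ,
      ∑ j ∈ Finset.range (m + 1),
        (Nat.choose m j : ℝ) * L m / (L j * L (m - j)) ≤ C := by
  have hA : (0 : ℝ) < 16 / ν₀ := by positivity
  refine ⟨4 / ρ, by positivity, fun m => ?_⟩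
  have hterm : ∀ j ∈ Finset.range (m + 1),
      (Nat.choose m j : ℝ) * L m / (L j * L (m - j))
      = ((m : ℝ) + 2) ^ 2 / (ρ * ((j : ℝ) + 2) ^ 2 * (((m - j : ℕ) : ℝ) + 2) ^ 2) := by
    intro j hj
    have hjm : j ≤ m := Nat.lt_succ_iff.mp (Finset.mem_range.mp hj)
    have hjk : j + (m - j) = m := Nat.add_sub_cancel' hjm
    have := gevrey_term_eq (16 / ν₀) ρ hA hρ j (m - j)
    rw [hjk] at this
    rw [hL m, hL j, hL (m - j)]
    exact this
  rw [Finset.sum_congr rfl hterm]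
  have hbound : ∀ j ∈ Finset.range (m + 1),
      ((m : ℝ) + 2) ^ 2 / (ρ * ((j : ℝ) + 2) ^ 2 * (((m - j : ℕ) : ℝ) + 2) ^ 2)
      ≤ 2 / ρ * (1 / ((j : ℝ) + 2) ^ 2 + 1 / (((m - j : ℕ) : ℝ) + 2) ^ 2) := by
    intro j hj
    have hjm : j ≤ m := Nat.lt_succ_iff.mp (Finset.mem_range.mp hj)
    have hjk : ((j : ℝ)) + ((m - j : ℕ) : ℝ) = (m : ℝ) := by
      exact_mod_cast congrArg (Nat.cast : ℕ → ℝ) (Nat.add_sub_cancel' hjm)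
    set a : ℝ := (j : ℝ) + 2 with ha
    set b : ℝ := ((m - j : ℕ) : ℝ) + 2 with hb
    have haj : (0 : ℝ) ≤ (j : ℝ) := Nat.cast_nonneg j
    have hbj : (0 : ℝ) ≤ ((m - j : ℕ) : ℝ) := Nat.cast_nonneg _
    have ha2 : (2 : ℝ) ≤ a := by rw [ha]; linarith
    have hb2 : (2 : ℝ) ≤ b := by rw [hb]; linarith
    have hm : (m : ℝ) + 2 ≤ a + b := by rw [ha, hb]; linarith [hjk]
    have key : ((m : ℝ) + 2) ^ 2 ≤ 2 * (a ^ 2 + b ^ 2) := by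
      nlinarith [sq_nonneg (a - b), sq_nonneg (a + b)]
    have e1 : 2 / ρ * (1 / a ^ 2 + 1 / b ^ 2) = 2 * (a ^ 2 + b ^ 2) / (ρ * a ^ 2 * b ^ 2) := by
      field_simp
      ring
    rw [e1, div_le_div_iff₀ (by positivity) (by positivity)]
    have hpos : (0 : ℝ) < ρ * a ^ 2 * b ^ 2 := by positivity
    nlinarith [mul_le_mul_of_nonneg_right key hpos.le]
  have hrefl : ∑ j ∈ Finset.range (m + 1), (1 : ℝ) / (((m - j : ℕ) : ℝ) + 2) ^ 2
      = ∑ j ∈ Finset.range (m + 1), (1 : ℝ) / ((j : ℝ) + 2) ^ 2 := by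
    have h := Finset.sum_range_reflect (fun j : ℕ => (1 : ℝ) / ((j : ℝ) + 2) ^ 2) (m + 1)
    simp only [Nat.add_sub_cancel] at h
    exact h
  calc ∑ j ∈ Finset.range (m + 1),
        ((m : ℝ) + 2) ^ 2 / (ρ * ((j : ℝ) + 2) ^ 2 * (((m - j : ℕ) : ℝ) + 2) ^ 2)
      ≤ ∑ j ∈ Finset.range (m + 1),
        2 / ρ * (1 / ((j : ℝ) + 2) ^ 2 + 1 / (((m - j : ℕ) : ℝ) + 2) ^ 2) :=
        Finset.sum_le_sum hbound
    _ = 2 / ρ * (∑ j ∈ Finset.range (m + 1), (1 : ℝ) / ((j : ℝ) + 2) ^ 2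
          + ∑ j ∈ Finset.range (m + 1), (1 : ℝ) / (((m - j : ℕ) : ℝ) + 2) ^ 2) := by
        rw [← Finset.mul_sum, Finset.sum_add_distrib]
    _ ≤ 2 / ρ * (1 + 1) := by
        have h := inv_sq_sum_le_one m
        rw [hrefl]
        have h2 : (0 : ℝ) ≤ 2 / ρ := by positivity
        nlinarith
    _ = 4 / ρ := by ring
end

section
/- Let f, g, h : ℝ → ℝ be differentiable functions with f' = g, g' = h and h' = 0 (so f is a quadratic polynomial). Then for every natural number n and every x ∈ ℝ, the n-th derivative of e^{f} satisfies the identity: (e^{f})^{(n)}(x) = e^{f(x)} · ∑_{m=0}^{⌊n/2⌋} [ n! / (m!·(n−2m)!) ] · (h(x)/2)^m · g(x)^{n−2m}. -/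
open Real Finset

private lemma cid (j d : ℕ) :
    ((2*j+d+3).factorial : ℝ) / ((j+1).factorial * (d+1).factorial)
      = ((2*j+d+2).factorial : ℝ) / ((j+1).factorial * d.factorial)
        + 2*((d:ℝ)+2) * (((2*j+d+2).factorial : ℝ) / (j.factorial * (d+2).factorial)) := by
  have e1 : (2*j+d+3).factorial = (2*j+d+3) * (2*j+d+2).factorial := by
    rw [show 2*j+d+3 = (2*j+d+2)+1 by ring, Nat.factorial_succ]
  have e2 : (d+1).factorial = (d+1) * d.factorial := Nat.factorial_succ d
  have e3 : (d+2).factorial = (d+2) * ((d+1) * d.factorial) := by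
    rw [show d+2 = (d+1)+1 by ring, Nat.factorial_succ, e2]
  have e4 : (j+1).factorial = (j+1) * j.factorial := Nat.factorial_succ j
  have h1 : (j.factorial : ℝ) ≠ 0 := Nat.cast_ne_zero.mpr (Nat.factorial_ne_zero _)
  have h2 : (d.factorial : ℝ) ≠ 0 := Nat.cast_ne_zero.mpr (Nat.factorial_ne_zero _)
  have h3 : ((j:ℝ)+1) ≠ 0 := by positivity
  have h4 : ((d:ℝ)+1) ≠ 0 := by positivity
  have h5 : ((d:ℝ)+2) ≠ 0 := by positivity
  rw [e1, e2, e3, e4]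
  push_cast
  field_simp
  ring

private lemma cid_top (k : ℕ) :
    ((2*k+2).factorial : ℝ) / ((k+1).factorial * (Nat.factorial 0 : ℕ)) =
      2 * (((2*k+1).factorial : ℝ) / (k.factorial * (Nat.factorial 1 : ℕ))) := by
  have e1 : (2*k+2).factorial = (2*k+2) * (2*k+1).factorial := by
    rw [show 2*k+2 = (2*k+1)+1 by ring, Nat.factorial_succ]
  have e4 : (k+1).factorial = (k+1) * k.factorial := Nat.factorial_succ k
  have h1 : (k.factorial : ℝ) ≠ 0 := Nat.cast_ne_zero.mpr (Nat.factorial_ne_zero _)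
  have h3 : ((k:ℝ)+1) ≠ 0 := by positivity
  rw [e1, e4]
  simp [Nat.factorial]
  push_cast
  field_simp

private lemma key (n : ℕ) (G H : ℝ) :
    G * (∑ m ∈ Finset.range (n/2+1),
          ((Nat.factorial n : ℝ) / ((Nat.factorial m : ℝ) * (Nat.factorial (n-2*m) : ℝ)))
            * H^m * G^(n-2*m))
      + ∑ m ∈ Finset.range (n/2+1),
          (((Nat.factorial n : ℝ) / ((Nat.factorial m : ℝ) * (Nat.factorial (n-2*m) : ℝ)))
            * H^m) * (((n-2*m : ℕ) : ℝ) * G^(n-2*m-1) * (2*H))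
      = ∑ m ∈ Finset.range ((n+1)/2+1),
          ((Nat.factorial (n+1) : ℝ) / ((Nat.factorial m : ℝ) * (Nat.factorial (n+1-2*m) : ℝ)))
            * H^m * G^(n+1-2*m) := by

  rcases Nat.even_or_odd n with ⟨k, rfl⟩ | ⟨k, rfl⟩
  · -- n = k + k
    have r1 : (k+k)/2 = k := by omega
    have r2 : (k+k+1)/2 = k := by omega
    rw [r1, r2, Finset.mul_sum]
    rw [Finset.sum_range_succ' (fun m => G *
      (((Nat.factorial (k+k) : ℝ) / ((Nat.factorial m : ℝ) * (Nat.factorial (k+k-2*m) : ℝ)))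
        * H^m * G^(k+k-2*m))) k]
    rw [Finset.sum_range_succ (fun m =>
      ((((Nat.factorial (k+k) : ℝ) / ((Nat.factorial m : ℝ) * (Nat.factorial (k+k-2*m) : ℝ)))
        * H^m) * (((k+k-2*m : ℕ) : ℝ) * G^(k+k-2*m-1) * (2*H)))) k]
    rw [Finset.sum_range_succ' (fun m =>
      ((Nat.factorial (k+k+1) : ℝ) / ((Nat.factorial m : ℝ) * (Nat.factorial (k+k+1-2*m) : ℝ)))
        * H^m * G^(k+k+1-2*m)) k]
    have hBk : (((k+k).factorial : ℝ) / (↑k.factorial * ↑(k + k - 2*k).factorial) * H ^ k *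
          (↑(k + k - 2*k) * G ^ (k + k - 2*k - 1) * (2 * H))) = 0 := by
      simp [show k+k-2*k = 0 from by omega]
    have hA0 : G * (((k+k).factorial:ℝ) / (↑(Nat.factorial 0) * ↑(k + k - 2*0).factorial) * H ^ 0 * G ^ (k + k - 2*0)) = ((k+k+1).factorial:ℝ) / (↑(Nat.factorial 0) * ↑(k + k + 1 - 2*0).factorial) * H ^ 0 * G ^ (k + k + 1 - 2*0) := by
      have h1 : (((k+k).factorial:ℝ)) ≠ 0 := Nat.cast_ne_zero.mpr (Nat.factorial_ne_zero _)
      have h2 : (((k+k+1).factorial:ℝ)) ≠ 0 := Nat.cast_ne_zero.mpr (Nat.factorial_ne_zero _)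
      simp only [Nat.mul_zero, Nat.sub_zero, pow_zero, Nat.factorial_zero, Nat.cast_one, one_mul, mul_one]
      rw [div_self h1, div_self h2, pow_succ]
      ring
    have main : ∑ m ∈ Finset.range k, (G * (((k+k).factorial:ℝ) / (↑(m + 1).factorial * ↑(k + k - 2 * (m + 1)).factorial) * H ^ (m + 1) * G ^ (k + k - 2 * (m + 1))) + (((k+k).factorial:ℝ) / (↑m.factorial * ↑(k + k - 2 * m).factorial) * H ^ m * (↑(k + k - 2 * m) * G ^ (k + k - 2 * m - 1) * (2 * H)))) = ∑ m ∈ Finset.range k, ((k+k+1).factorial:ℝ) / (↑(m + 1).factorial * ↑(k + k + 1 - 2 * (m + 1)).factorial) * H ^ (m + 1) * G ^ (k + k + 1 - 2 * (m + 1)) := by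
      refine Finset.sum_congr rfl fun m hm => ?_
      rw [Finset.mem_range] at hm
      obtain ⟨d, hd⟩ : ∃ d, k + k = 2*m + d + 2 := ⟨k+k-2*m-2, by omega⟩
      simp only [hd, show 2*m+d+2-2*(m+1) = d from by omega,
        show 2*m+d+2-2*m = d+2 from by omega, show d+2-1 = d+1 from by omega,
        show 2*m+d+2+1-2*(m+1) = d+1 from by omega,
        show 2*m+d+2+1 = 2*m+d+3 from by omega]
      push_cast
      linear_combination (-(H^(m+1) * G^(d+1))) * cid m d
    rw [Finset.sum_add_distrib] at main
    linear_combination main + hA0 + hBk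

  · -- n = 2*k+1
    have r1 : (2*k+1)/2 = k := by omega
    have r2 : (2*k+1+1)/2 = k+1 := by omega
    rw [r1, r2, Finset.mul_sum]
    rw [Finset.sum_range_succ' (fun m => G *
      (((Nat.factorial (2*k+1) : ℝ) / ((Nat.factorial m : ℝ) * (Nat.factorial (2*k+1-2*m) : ℝ)))
        * H^m * G^(2*k+1-2*m))) k]
    rw [Finset.sum_range_succ (fun m =>
      ((((Nat.factorial (2*k+1) : ℝ) / ((Nat.factorial m : ℝ) * (Nat.factorial (2*k+1-2*m) : ℝ)))
        * H^m) * (((2*k+1-2*m : ℕ) : ℝ) * G^(2*k+1-2*m-1) * (2*H)))) k]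
    rw [Finset.sum_range_succ' (fun m =>
      ((Nat.factorial (2*k+1+1) : ℝ) / ((Nat.factorial m : ℝ) * (Nat.factorial (2*k+1+1-2*m) : ℝ)))
        * H^m * G^(2*k+1+1-2*m)) (k+1)]
    rw [Finset.sum_range_succ (fun m =>
      ((Nat.factorial (2*k+1+1) : ℝ) / ((Nat.factorial (m+1) : ℝ) * (Nat.factorial (2*k+1+1-2*(m+1)) : ℝ)))
        * H^(m+1) * G^(2*k+1+1-2*(m+1))) k]
    have h0 : G * (((2*k+1).factorial:ℝ) / (↑(Nat.factorial 0) * ↑(2*k+1 - 2*0).factorial) * H ^ 0 * G ^ (2*k+1 - 2*0)) = ((2*k+1+1).factorial:ℝ) / (↑(Nat.factorial 0) * ↑(2*k+1+1 - 2*0).factorial) * H ^ 0 * G ^ (2*k+1+1 - 2*0) := by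
      have h1 : (((2*k+1).factorial:ℝ)) ≠ 0 := Nat.cast_ne_zero.mpr (Nat.factorial_ne_zero _)
      have h2 : (((2*k+1+1).factorial:ℝ)) ≠ 0 := Nat.cast_ne_zero.mpr (Nat.factorial_ne_zero _)
      simp only [Nat.mul_zero, Nat.sub_zero, pow_zero, Nat.factorial_zero, Nat.cast_one, one_mul, mul_one]
      rw [div_self h1, div_self h2, pow_succ]
      ring
    have htop : (((2*k+1).factorial:ℝ) / (↑k.factorial * ↑(2*k+1 - 2*k).factorial) * H ^ k * (↑(2*k+1 - 2*k) * G ^ (2*k+1 - 2*k - 1) * (2 * H))) = ((2*k+1+1).factorial:ℝ) / (↑(k+1).factorial * ↑(2*k+1+1 - 2*(k+1)).factorial) * H ^ (k+1) * G ^ (2*k+1+1 - 2*(k+1)) := by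
      simp only [show 2*k+1-2*k = 1 from by omega, show (1:ℕ)-1 = 0 from rfl,
        show 2*k+1+1-2*(k+1) = 0 from by omega, show 2*k+1+1 = 2*k+2 from by omega]
      push_cast [pow_succ]
      linear_combination (-(H^(k+1))) * cid_top k
    have main : ∑ m ∈ Finset.range k, (G * (((2*k+1).factorial:ℝ) / (↑(m + 1).factorial * ↑(2*k+1 - 2 * (m + 1)).factorial) * H ^ (m + 1) * G ^ (2*k+1 - 2 * (m + 1))) + (((2*k+1).factorial:ℝ) / (↑m.factorial * ↑(2*k+1 - 2 * m).factorial) * H ^ m * (↑(2*k+1 - 2 * m) * G ^ (2*k+1 - 2 * m - 1) * (2 * H)))) = ∑ m ∈ Finset.range k, ((2*k+1+1).factorial:ℝ) / (↑(m + 1).factorial * ↑(2*k+1+1 - 2 * (m + 1)).factorial) * H ^ (m + 1) * G ^ (2*k+1+1 - 2 * (m + 1)) := by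
      refine Finset.sum_congr rfl fun m hm => ?_
      rw [Finset.mem_range] at hm
      obtain ⟨d, hd⟩ : ∃ d, 2*k+1 = 2*m + d + 2 := ⟨2*k+1-2*m-2, by omega⟩
      simp only [hd, show 2*m+d+2-2*(m+1) = d from by omega,
        show 2*m+d+2-2*m = d+2 from by omega, show d+2-1 = d+1 from by omega,
        show 2*m+d+2+1-2*(m+1) = d+1 from by omega,
        show 2*m+d+2+1 = 2*m+d+3 from by omega]
      push_cast
      linear_combination (-(H^(m+1) * G^(d+1))) * cid m d
    rw [Finset.sum_add_distrib] at main
    linear_combination main + h0 + htop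



/-- If `f' = g`, `g' = h`, `h' = 0` (so `f` is a quadratic polynomial), then the
`n`-th derivative of `e^f` is
`(e^f)^{(n)}(x) = e^{f(x)} ∑_{m=0}^{⌊n/2⌋} n!/(m!(n−2m)!) (h(x)/2)^m g(x)^{n−2m}`. -/
theorem iteratedDeriv_exp_quadratic (f g h : ℝ → ℝ)
    (hfd : Differentiable ℝ f) (hgd : Differentiable ℝ g) (hhd : Differentiable ℝ h)
    (hfg : ∀ x, deriv f x = g x) (hgh : ∀ x, deriv g x = h x)
    (hh0 : ∀ x, deriv h x = 0) :
    ∀ (n : ℕ) (x : ℝ),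
      iteratedDeriv n (fun y => Real.exp (f y)) x =
        Real.exp (f x) *
          ∑ m ∈ Finset.range (n / 2 + 1),
            ((Nat.factorial n : ℝ) /
                ((Nat.factorial m : ℝ) * (Nat.factorial (n - 2 * m) : ℝ))) *
              (h x / 2) ^ m * (g x) ^ (n - 2 * m) := by
  intro n
  induction n with
  | zero =>
    intro x
    simp [Nat.factorial]
  | succ n ih =>
    intro x
    have hfn : iteratedDeriv n (fun y => Real.exp (f y)) = fun y =>
        Real.exp (f y) * ∑ m ∈ Finset.range (n / 2 + 1),
          ((Nat.factorial n : ℝ) / ((Nat.factorial m : ℝ) * (Nat.factorial (n - 2 * m) : ℝ))) *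
            (h y / 2) ^ m * (g y) ^ (n - 2 * m) := funext ih
    rw [iteratedDeriv_succ, hfn]
    -- derivative components
    have hE : HasDerivAt (fun y => Real.exp (f y)) (Real.exp (f x) * g x) x := by
      have := ((hfd x).hasDerivAt).exp
      rwa [hfg x] at this
    have hS : HasDerivAt (fun y => ∑ m ∈ Finset.range (n / 2 + 1),
        ((Nat.factorial n : ℝ) / ((Nat.factorial m : ℝ) * (Nat.factorial (n - 2 * m) : ℝ))) *
          (h y / 2) ^ m * (g y) ^ (n - 2 * m))
        (∑ m ∈ Finset.range (n / 2 + 1),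
          (((Nat.factorial n : ℝ) / ((Nat.factorial m : ℝ) * (Nat.factorial (n - 2 * m) : ℝ))) *
            (h x / 2) ^ m) * (((n - 2 * m : ℕ) : ℝ) * (g x) ^ (n - 2 * m - 1) * h x)) x := by
      apply HasDerivAt.fun_sum
      intro m _
      have hh : HasDerivAt h 0 x := by
        have := (hhd x).hasDerivAt
        rwa [hh0 x] at this
      have hhp : HasDerivAt (fun y => ((Nat.factorial n : ℝ) /
          ((Nat.factorial m : ℝ) * (Nat.factorial (n - 2 * m) : ℝ))) * (h y / 2) ^ m) 0 x := by
        have := ((hh.div_const 2).pow m).const_mul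
          ((Nat.factorial n : ℝ) / ((Nat.factorial m : ℝ) * (Nat.factorial (n - 2 * m) : ℝ)))
        simpa using this
      have hg : HasDerivAt g (h x) x := by
        have := (hgd x).hasDerivAt
        rwa [hgh x] at this
      have hgp : HasDerivAt (fun y => (g y) ^ (n - 2 * m))
          (((n - 2 * m : ℕ) : ℝ) * (g x) ^ (n - 2 * m - 1) * h x) x := hg.pow _
      have := hhp.fun_mul hgp
      simpa using this
    have hD := hE.fun_mul hS
    rw [hD.deriv]
    have hx2 : h x = 2 * (h x / 2) := by ring
    rw [show Real.exp (f x) * g x *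
        (∑ m ∈ Finset.range (n / 2 + 1),
          ((Nat.factorial n : ℝ) / ((Nat.factorial m : ℝ) * (Nat.factorial (n - 2 * m) : ℝ))) *
            (h x / 2) ^ m * (g x) ^ (n - 2 * m)) +
        Real.exp (f x) *
        (∑ m ∈ Finset.range (n / 2 + 1),
          (((Nat.factorial n : ℝ) / ((Nat.factorial m : ℝ) * (Nat.factorial (n - 2 * m) : ℝ))) *
            (h x / 2) ^ m) * (((n - 2 * m : ℕ) : ℝ) * (g x) ^ (n - 2 * m - 1) * h x)) =
        Real.exp (f x) * (g x *
        (∑ m ∈ Finset.range (n / 2 + 1),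
          ((Nat.factorial n : ℝ) / ((Nat.factorial m : ℝ) * (Nat.factorial (n - 2 * m) : ℝ))) *
            (h x / 2) ^ m * (g x) ^ (n - 2 * m)) +
        ∑ m ∈ Finset.range (n / 2 + 1),
          (((Nat.factorial n : ℝ) / ((Nat.factorial m : ℝ) * (Nat.factorial (n - 2 * m) : ℝ))) *
            (h x / 2) ^ m) * (((n - 2 * m : ℕ) : ℝ) * (g x) ^ (n - 2 * m - 1) * (2 * (h x / 2)))) from by
          rw [← hx2]; ring]
    rw [key n (g x) (h x / 2)]
end

section
/- Let λ > 0 be a real number and let a, φ : [0,∞) → ℝ be such that a ∈ L²(0,∞), φ is twice continuously differentiable with φ, φ', φ'' ∈ L²(0,∞), φ'(0) = 0, and φ solves the elliptic equation λ²·φ(x) − φ''(x) = −(λ²/(1+λ²))·a(x) for all x ≥ 0. Then there exists a universal constant C > 0 (independent of λ, a and φ) such that (λ² + λ⁴)·‖φ‖²_{L²(0,∞)} + (1 + λ²)·‖φ'‖²_{L²(0,∞)} + ‖φ''‖²_{L²(0,∞)} ≤ C · (λ²/(1+λ²)) · ‖a‖²_{L²(0,∞)}. -/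
open MeasureTheory

-- helper: product of two continuous L² functions is L¹ on Ioi 0
lemma mul_integrableOn (f g : ℝ → ℝ) (hf : Continuous f) (hg : Continuous g)
    (hf2 : IntegrableOn (fun x => f x ^ 2) (Set.Ioi 0) volume)
    (hg2 : IntegrableOn (fun x => g x ^ 2) (Set.Ioi 0) volume) :
    IntegrableOn (fun x => f x * g x) (Set.Ioi 0) volume := by
  refine Integrable.mono' ((hf2.add hg2).const_mul (1/2)) ((hf.mul hg).aestronglyMeasurable) ?_
  filter_upwards with x
  rw [Real.norm_eq_abs, abs_mul]; simp only [Pi.add_apply]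
  nlinarith [sq_nonneg (|f x| - |g x|), sq_abs (f x), sq_abs (g x), abs_nonneg (f x), abs_nonneg (g x)]

-- key integration by parts
lemma ibp (φ : ℝ → ℝ) (hφ : ContDiff ℝ 2 φ)
    (hP : IntegrableOn (fun x => φ x ^ 2) (Set.Ioi 0) volume)
    (hQ : IntegrableOn (fun x => deriv φ x ^ 2) (Set.Ioi 0) volume)
    (hR : IntegrableOn (fun x => deriv (deriv φ) x ^ 2) (Set.Ioi 0) volume)
    (hb : deriv φ 0 = 0) :
    ∫ x in Set.Ioi (0:ℝ), φ x * deriv (deriv φ) x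
      = - ∫ x in Set.Ioi (0:ℝ), deriv φ x ^ 2 := by
  have h2 : ContDiff ℝ ((1:ℕ) + 1) φ := by exact_mod_cast hφ
  have h1 : ContDiff ℝ 1 (deriv φ) := (contDiff_succ_iff_deriv.mp h2).2.2
  have hcφ : Continuous φ := hφ.continuous
  have hcφ' : Continuous (deriv φ) := h1.continuous
  have hcφ'' : Continuous (deriv (deriv φ)) := h1.continuous_deriv le_rfl
  set g : ℝ → ℝ := fun x => φ x * deriv φ x with hg
  have hder : ∀ x ∈ Set.Ici (0:ℝ), HasDerivAt g
      (deriv φ x * deriv φ x + φ x * deriv (deriv φ) x) x := by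
    intro x _
    exact ((hφ.differentiable two_ne_zero x).hasDerivAt).mul
      ((h1.differentiable one_ne_zero x).hasDerivAt)
  have hg'int : IntegrableOn
      (fun x => deriv φ x * deriv φ x + φ x * deriv (deriv φ) x) (Set.Ioi 0) volume := by
    refine Integrable.add ?_ (mul_integrableOn _ _ hcφ hcφ'' hP hR)
    exact (by simpa [pow_two] using hQ : IntegrableOn (fun x => deriv φ x * deriv φ x) (Set.Ioi 0) volume)
  have hgint : IntegrableOn g (Set.Ioi 0) volume :=
    mul_integrableOn _ _ hcφ hcφ' hP hQ
  have htend : Filter.Tendsto g Filter.atTop (nhds 0) :=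
    tendsto_zero_of_hasDerivAt_of_integrableOn_Ioi
      (fun x (hx : x ∈ Set.Ioi (0:ℝ)) => hder x (Set.mem_Ici.mpr (le_of_lt hx))) hg'int hgint
  have h0 : ∫ x in Set.Ioi (0:ℝ),
      (deriv φ x * deriv φ x + φ x * deriv (deriv φ) x) = 0 - g 0 :=
    integral_Ioi_of_hasDerivAt_of_tendsto' hder hg'int htend
  have hg0 : g 0 = 0 := by simp [hg, hb]
  rw [hg0, sub_zero] at h0
  have hsplit : ∫ x in Set.Ioi (0:ℝ),
      (deriv φ x * deriv φ x + φ x * deriv (deriv φ) x)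
      = (∫ x in Set.Ioi (0:ℝ), deriv φ x ^ 2)
        + ∫ x in Set.Ioi (0:ℝ), φ x * deriv (deriv φ) x := by
    rw [← integral_add hQ
      (mul_integrableOn _ _ hcφ hcφ'' hP hR)]
    congr 1; ext x; ring
  linarith [hsplit ▸ h0]

/-- Degenerate elliptic regularity estimate on the half-line: there is a universal
constant `C > 0` such that whenever `λ > 0`, `a ∈ L²(0,∞)`, `φ` is `C²` with
`φ, φ', φ'' ∈ L²(0,∞)`, `φ'(0) = 0`, and `λ²φ − φ'' = −(λ²/(1+λ²))·a` on `[0,∞)`, one has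
`(λ²+λ⁴)‖φ‖² + (1+λ²)‖φ'‖² + ‖φ''‖² ≤ C·(λ²/(1+λ²))·‖a‖²`. -/
theorem degenerate_elliptic_regularity :
    ∃ C > (0 : ℝ), ∀ (lam : ℝ), 0 < lam → ∀ (a φ : ℝ → ℝ),
      IntegrableOn (fun x => a x ^ 2) (Set.Ioi 0) volume →
      ContDiff ℝ 2 φ →
      IntegrableOn (fun x => φ x ^ 2) (Set.Ioi 0) volume →
      IntegrableOn (fun x => deriv φ x ^ 2) (Set.Ioi 0) volume →
      IntegrableOn (fun x => deriv (deriv φ) x ^ 2) (Set.Ioi 0) volume →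
      deriv φ 0 = 0 →
      (∀ x : ℝ, 0 ≤ x →
        lam ^ 2 * φ x - deriv (deriv φ) x = -(lam ^ 2 / (1 + lam ^ 2)) * a x) →
      (lam ^ 2 + lam ^ 4) * (∫ x in Set.Ioi (0 : ℝ), φ x ^ 2) +
          (1 + lam ^ 2) * (∫ x in Set.Ioi (0 : ℝ), deriv φ x ^ 2) +
          (∫ x in Set.Ioi (0 : ℝ), deriv (deriv φ) x ^ 2) ≤
        C * (lam ^ 2 / (1 + lam ^ 2)) * (∫ x in Set.Ioi (0 : ℝ), a x ^ 2) := by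
  refine ⟨6, by norm_num, ?_⟩
  intro lam hlam a φ hA2 hφ hP2 hQ2 hR2 hb heq
  set dd := deriv (deriv φ) with hdd
  set P := ∫ x in Set.Ioi (0:ℝ), φ x ^ 2 with hPdef
  set Q := ∫ x in Set.Ioi (0:ℝ), deriv φ x ^ 2 with hQdef
  set R := ∫ x in Set.Ioi (0:ℝ), dd x ^ 2 with hRdef
  set A := ∫ x in Set.Ioi (0:ℝ), a x ^ 2 with hAdef
  have hD : (0:ℝ) < 1 + lam ^ 2 := by positivity
  have h2 : ContDiff ℝ ((1:ℕ) + 1) φ := by exact_mod_cast hφ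
  have h1 : ContDiff ℝ 1 (deriv φ) := (contDiff_succ_iff_deriv.mp h2).2.2
  have hcφ : Continuous φ := hφ.continuous
  have hcφ'' : Continuous dd := h1.continuous_deriv le_rfl
  have hmul : IntegrableOn (fun x => φ x * dd x) (Set.Ioi 0) volume :=
    mul_integrableOn _ _ hcφ hcφ'' hP2 hR2
  -- square the equation and integrate
  have hsq : Set.EqOn (fun x => lam^4 * φ x ^ 2 - 2*lam^2 * (φ x * dd x) + dd x ^ 2)
      (fun x => (lam^2/(1+lam^2))^2 * a x ^ 2) (Set.Ioi 0) := by
    intro x hx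
    have h := heq x (le_of_lt hx)
    have : (lam ^ 2 * φ x - dd x)^2 = (-(lam ^ 2 / (1 + lam ^ 2)) * a x)^2 := by rw [h]
    simp only
    nlinarith [this]
  have hint : ∫ x in Set.Ioi (0:ℝ),
      (lam^4 * φ x ^ 2 - 2*lam^2 * (φ x * dd x) + dd x ^ 2)
      = (lam^2/(1+lam^2))^2 * A := by
    rw [setIntegral_congr_fun measurableSet_Ioi hsq, integral_const_mul]
  have hsplit : ∫ x in Set.Ioi (0:ℝ),
      (lam^4 * φ x ^ 2 - 2*lam^2 * (φ x * dd x) + dd x ^ 2)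
      = lam^4 * P - 2*lam^2 * (∫ x in Set.Ioi (0:ℝ), φ x * dd x) + R := by
    have ha : IntegrableOn (fun x => lam^4 * φ x ^ 2) (Set.Ioi 0) volume :=
      hP2.const_mul _
    have hbb : IntegrableOn (fun x => 2*lam^2 * (φ x * dd x)) (Set.Ioi 0) volume :=
      hmul.const_mul _
    have hab : IntegrableOn (fun x => lam^4 * φ x ^ 2 - 2*lam^2 * (φ x * dd x))
        (Set.Ioi 0) volume := ha.sub hbb
    rw [integral_add hab hR2, integral_sub ha hbb,
      integral_const_mul, integral_const_mul]
  have hibp : ∫ x in Set.Ioi (0:ℝ), φ x * dd x = -Q := ibp φ hφ hP2 hQ2 hR2 hb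
  have hE : lam^4 * P + 2*lam^2 * Q + R = (lam^2/(1+lam^2))^2 * A := by
    rw [hibp] at hsplit; linarith [hsplit ▸ hint]
  have hE' : (1+lam^2)^2 * (lam^4 * P + 2*lam^2 * Q + R) = lam^4 * A := by
    rw [hE]; field_simp
  have hP0 : 0 ≤ P := setIntegral_nonneg measurableSet_Ioi fun x _ => sq_nonneg _
  have hQ0 : 0 ≤ Q := setIntegral_nonneg measurableSet_Ioi fun x _ => sq_nonneg _
  have hR0 : 0 ≤ R := setIntegral_nonneg measurableSet_Ioi fun x _ => sq_nonneg _
  have hgoal : 6 * (lam^2/(1+lam^2)) * A = 6*lam^2*A / (1+lam^2) := by ring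
  rw [hgoal, le_div_iff₀ hD]
  have hl2 : (0:ℝ) < lam^2 := by positivity
  have key : lam^2 * (((lam ^ 2 + lam ^ 4) * P + (1 + lam ^ 2) * Q + R) * (1+lam^2))
      ≤ lam^2 * (6*lam^2*A) := by
    have expand : lam^2 * (6*lam^2*A) = 6 * (lam^4 * A) := by ring
    rw [expand, ← hE']
    nlinarith [mul_nonneg hP0 (by positivity : (0:ℝ) ≤ lam^4),
      mul_nonneg hP0 (by positivity : (0:ℝ) ≤ lam^6),
      mul_nonneg hQ0 (by positivity : (0:ℝ) ≤ lam^2),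
      mul_nonneg hQ0 (by positivity : (0:ℝ) ≤ lam^4),
      mul_nonneg hR0 (by positivity : (0:ℝ) ≤ lam^2), hR0]
  exact le_of_mul_le_mul_left key hl2
end

section
/- Let λ > 0 be a real number and let a, φ : [0,∞) → ℝ be such that a ∈ L²(0,∞), φ is twice continuously differentiable with φ, φ', φ'' ∈ L²(0,∞), φ'(0) = 0, and φ solves the elliptic equation λ²·φ(x) − φ''(x) = −(λ²/(1+λ²))·a(x) for all x ≥ 0. Then there exists a universal constant C > 0 (independent of λ, a and φ) such that the boundary value satisfies |φ(0)| ≤ C · (1+λ²)^{−1/2} · ‖a‖_{L²(0,∞)} (equivalently, λ·|φ(0)| ≤ C·(λ/√(1+λ²))·‖a‖_{L²(0,∞)}). -/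
open MeasureTheory Set Filter

private lemma limitZero {f : ℝ → ℝ} {L : ℝ}
    (hf : IntegrableOn f (Set.Ioi 0) volume)
    (hL : Tendsto f atTop (nhds L)) : L = 0 := by
  by_contra h
  have hLpos : 0 < |L| := abs_pos.mpr h
  have habs : Tendsto (fun x => |f x|) atTop (nhds |L|) := hL.abs
  obtain ⟨M, hM⟩ := eventually_atTop.mp (habs.eventually (eventually_gt_nhds (by linarith : |L|/2 < |L|)))
  set M' : ℝ := max M 1 with hM'
  have hsub : Set.Ioi M' ⊆ Set.Ioi 0 := fun x hx => lt_trans (lt_of_lt_of_le zero_lt_one (le_max_right M 1)) hx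
  have hfi : IntegrableOn f (Set.Ioi M') volume := hf.mono_set hsub
  have hconst : IntegrableOn (fun _ : ℝ => |L|/2) (Set.Ioi M') volume := by
    apply Integrable.mono' hfi.abs aestronglyMeasurable_const
    rw [ae_restrict_iff' measurableSet_Ioi]
    filter_upwards with x hx
    have hx1 : M ≤ x := le_of_lt (lt_of_le_of_lt (le_max_left M 1) hx)
    have := hM x hx1
    rw [Real.norm_eq_abs, abs_of_pos (by positivity : (0:ℝ) < |L|/2)]
    linarith
  rcases ((integrableOn_const_iff (C := |L|/2) (s := Set.Ioi M') (μ := volume) (by simp)).mp hconst).imp_left enorm_eq_zero.mp with h1 | h2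
  · have : (0:ℝ) < |L|/2 := by positivity
    rw [h1] at this; exact lt_irrefl 0 this
  · rw [Real.volume_Ioi] at h2; exact absurd h2 (by simp)

private lemma integralDerivIoi {F F' : ℝ → ℝ} (hd : ∀ x, HasDerivAt F (F' x) x)
    (hF : IntegrableOn F (Set.Ioi 0) volume) (hF' : IntegrableOn F' (Set.Ioi 0) volume) :
    (∫ x in Set.Ioi (0:ℝ), F' x) = -F 0 := by
  have hI : Tendsto (fun b => ∫ x in (0:ℝ)..b, F' x) atTop
      (nhds (∫ x in Set.Ioi (0:ℝ), F' x)) :=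
    intervalIntegral_tendsto_integral_Ioi 0 hF' tendsto_id
  have heq : ∀ᶠ b in atTop, (∫ x in (0:ℝ)..b, F' x) + F 0 = F b := by
    filter_upwards [eventually_ge_atTop (0:ℝ)] with b hb
    have hii : IntervalIntegrable F' volume 0 b := by
      rw [intervalIntegrable_iff, uIoc_of_le hb]
      exact hF'.mono_set Ioc_subset_Ioi_self
    rw [intervalIntegral.integral_eq_sub_of_hasDerivAt (fun x _ => hd x) hii]
    ring
  have hFt : Tendsto F atTop (nhds ((∫ x in Set.Ioi (0:ℝ), F' x) + F 0)) :=
    Tendsto.congr' heq (hI.add_const _)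
  have := limitZero hF hFt
  linarith

private lemma integrableOnMul {f g : ℝ → ℝ} (hf : Continuous f) (hg : Continuous g)
    (hf2 : IntegrableOn (fun x => f x ^ 2) (Set.Ioi 0) volume)
    (hg2 : IntegrableOn (fun x => g x ^ 2) (Set.Ioi 0) volume) :
    IntegrableOn (fun x => f x * g x) (Set.Ioi 0) volume := by
  have hbound : IntegrableOn (fun x => f x ^ 2 / 2 + g x ^ 2 / 2) (Set.Ioi 0) volume :=
    (hf2.div_const 2).add (hg2.div_const 2)
  apply Integrable.mono' hbound (hf.mul hg).aestronglyMeasurable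
  filter_upwards with x
  rw [Real.norm_eq_abs, abs_le, Pi.mul_apply]
  constructor <;> nlinarith [sq_nonneg (f x - g x), sq_nonneg (f x + g x)]

private lemma integralMulLe {f g : ℝ → ℝ} (hf : Continuous f) (hg : Continuous g)
    (hf2 : IntegrableOn (fun x => f x ^ 2) (Set.Ioi 0) volume)
    (hg2 : IntegrableOn (fun x => g x ^ 2) (Set.Ioi 0) volume)
    {ε : ℝ} (hε : 0 < ε) :
    |∫ x in Set.Ioi (0:ℝ), f x * g x| ≤
      (ε/2) * (∫ x in Set.Ioi (0:ℝ), f x ^ 2) + (1/(2*ε)) * ∫ x in Set.Ioi (0:ℝ), g x ^ 2 := by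
  have h3 : (0:ℝ) < 2*ε := by linarith
  have hkey : ∀ u v : ℝ, u*v ≤ ε/2*u^2 + 1/(2*ε)*v^2 := by
    intro u v
    have h0 := sq_nonneg (ε*u - v)
    have h1 : ε/2*u^2 + 1/(2*ε)*v^2 - u*v = (ε*u - v)^2/(2*ε) := by
      field_simp; ring
    linarith [div_nonneg h0 h3.le]
  have hmul := integrableOnMul hf hg hf2 hg2
  have hbound : IntegrableOn (fun x => ε/2 * f x ^ 2 + 1/(2*ε) * g x ^ 2) (Set.Ioi 0) volume :=
    (hf2.const_mul _).add (hg2.const_mul _)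
  have h1 : |∫ x in Set.Ioi (0:ℝ), f x * g x| ≤ ∫ x in Set.Ioi (0:ℝ), |f x * g x| := by
    simpa only [Real.norm_eq_abs] using norm_integral_le_integral_norm (μ := volume.restrict (Set.Ioi 0)) (fun x => f x * g x)
  have h2 : (∫ x in Set.Ioi (0:ℝ), |f x * g x|) ≤
      ∫ x in Set.Ioi (0:ℝ), (ε/2 * f x ^ 2 + 1/(2*ε) * g x ^ 2) := by
    apply setIntegral_mono_on hmul.abs hbound measurableSet_Ioi
    intro x _
    rw [abs_le]
    constructor
    · nlinarith [hkey (-(f x)) (g x)]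
    · exact hkey _ _
  have h4 : (∫ x in Set.Ioi (0:ℝ), (ε/2 * f x ^ 2 + 1/(2*ε) * g x ^ 2)) =
      (ε/2) * (∫ x in Set.Ioi (0:ℝ), f x ^ 2) + (1/(2*ε)) * ∫ x in Set.Ioi (0:ℝ), g x ^ 2 := by
    rw [integral_add (hf2.const_mul _) (hg2.const_mul _), integral_const_mul, integral_const_mul]
  linarith
set_option maxHeartbeats 1000000 in
/-- Trace estimate on the half-line: there is a universal constant `C > 0` such
that whenever `λ > 0`, `a ∈ L²(0,∞)`, `φ` is `C²` with `φ, φ', φ'' ∈ L²(0,∞)`,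
`φ'(0) = 0`, and `λ²φ − φ'' = −(λ²/(1+λ²))·a` on `[0,∞)`, the boundary value satisfies
`|φ(0)| ≤ C·(1+λ²)^{−1/2}·‖a‖_{L²(0,∞)}`. -/
theorem degenerate_elliptic_trace :
    ∃ C > (0 : ℝ), ∀ (lam : ℝ), 0 < lam → ∀ (a φ : ℝ → ℝ),
      IntegrableOn (fun x => a x ^ 2) (Set.Ioi 0) volume →
      ContDiff ℝ 2 φ →
      IntegrableOn (fun x => φ x ^ 2) (Set.Ioi 0) volume →
      IntegrableOn (fun x => deriv φ x ^ 2) (Set.Ioi 0) volume →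
      IntegrableOn (fun x => deriv (deriv φ) x ^ 2) (Set.Ioi 0) volume →
      deriv φ 0 = 0 →
      (∀ x : ℝ, 0 ≤ x →
        lam ^ 2 * φ x - deriv (deriv φ) x = -(lam ^ 2 / (1 + lam ^ 2)) * a x) →
      |φ 0| ≤ C * (1 + lam ^ 2) ^ (-(1 : ℝ) / 2) *
        Real.sqrt (∫ x in Set.Ioi (0 : ℝ), a x ^ 2) := by
  refine ⟨2, by norm_num, ?_⟩
  intro lam hlam a φ ha2 hC2 hφ2 hφ'2 hφ''2 hd0 heq
  -- regularity
  have hφc : Continuous φ := hC2.continuous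
  have hφd : Differentiable ℝ φ := hC2.differentiable (by norm_num)
  have h2' : ContDiff ℝ (1+1) φ := by rwa [one_add_one_eq_two]
  have h1 : ContDiff ℝ 1 (deriv φ) := (contDiff_succ_iff_deriv.mp h2').2.2
  have hφ'd : Differentiable ℝ (deriv φ) := h1.differentiable one_ne_zero
  have hφ'c : Continuous (deriv φ) := h1.continuous
  have hφ''c : Continuous (deriv (deriv φ)) := h1.continuous_deriv le_rfl
  set T : ℝ := 1 + lam ^ 2 with hT
  have hlamT : lam ^ 2 + 1 = T := by rw [hT]; ring
  have hT1 : (1:ℝ) ≤ T := by nlinarith [sq_nonneg lam]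
  have hTpos : (0:ℝ) < T := by linarith
  have hl2 : (0:ℝ) < lam ^ 2 := by positivity
  clear_value T
  -- continuous representative of a
  set g : ℝ → ℝ := fun x => -(T/lam^2) * (lam^2 * φ x - deriv (deriv φ) x) with hgdef
  have hgc : Continuous g := by
    exact continuous_const.mul (((continuous_const.mul hφc)).sub hφ''c)
  have hag : ∀ x ∈ Set.Ioi (0:ℝ), a x = g x := by
    intro x hx
    have h := heq x hx.le
    rw [hgdef]
    simp only
    rw [h]
    field_simp
  clear_value g
  have hag2 : Set.EqOn (fun x => a x ^ 2) (fun x => g x ^ 2) (Set.Ioi 0) := by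
    intro x hx; simp only; rw [hag x hx]
  have hAeq : (∫ x in Set.Ioi (0:ℝ), a x ^ 2) = ∫ x in Set.Ioi (0:ℝ), g x ^ 2 :=
    setIntegral_congr_fun measurableSet_Ioi hag2
  have hg2 : IntegrableOn (fun x => g x ^ 2) (Set.Ioi 0) volume :=
    ha2.congr_fun hag2 measurableSet_Ioi
  set A : ℝ := ∫ x in Set.Ioi (0:ℝ), g x ^ 2 with hA
  set P : ℝ := ∫ x in Set.Ioi (0:ℝ), φ x ^ 2 with hP
  set D : ℝ := ∫ x in Set.Ioi (0:ℝ), deriv φ x ^ 2 with hD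
  have hA0 : 0 ≤ A := setIntegral_nonneg measurableSet_Ioi fun x _ => sq_nonneg _
  have hP0 : 0 ≤ P := setIntegral_nonneg measurableSet_Ioi fun x _ => sq_nonneg _
  have hD0 : 0 ≤ D := setIntegral_nonneg measurableSet_Ioi fun x _ => sq_nonneg _
  clear_value A P D
  -- integrability of products
  have hφφ' : IntegrableOn (fun x => φ x * deriv φ x) (Set.Ioi 0) volume :=
    integrableOnMul hφc hφ'c hφ2 hφ'2
  have hφφ'' : IntegrableOn (fun x => φ x * deriv (deriv φ) x) (Set.Ioi 0) volume :=
    integrableOnMul hφc hφ''c hφ2 hφ''2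
  have hφg : IntegrableOn (fun x => φ x * g x) (Set.Ioi 0) volume :=
    integrableOnMul hφc hgc hφ2 hg2
  -- Step A : ∫ (φ'^2 + φ φ'') = 0
  have hprod1 : ∀ x, HasDerivAt (fun y => φ y * deriv φ y)
      (deriv φ x ^ 2 + φ x * deriv (deriv φ) x) x := by
    intro x
    have h := ((hφd x).hasDerivAt).mul ((hφ'd x).hasDerivAt)
    rw [sq]; exact h
  have hF'int : IntegrableOn (fun x => deriv φ x ^ 2 + φ x * deriv (deriv φ) x)
      (Set.Ioi 0) volume := hφ'2.add hφφ''
  have hstepA : (∫ x in Set.Ioi (0:ℝ), (deriv φ x ^ 2 + φ x * deriv (deriv φ) x)) = 0 := by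
    rw [integralDerivIoi hprod1 hφφ' hF'int, hd0]; ring
  rw [integral_add hφ'2 hφφ''] at hstepA
  -- rewrite φ φ'' using the ODE
  have hode : Set.EqOn (fun x => φ x * deriv (deriv φ) x)
      (fun x => lam^2 * φ x ^ 2 + (lam^2/T) * (φ x * g x)) (Set.Ioi 0) := by
    intro x hx
    have h := heq x (le_of_lt hx)
    rw [hag x hx] at h
    simp only
    have h2 : deriv (deriv φ) x = lam^2 * φ x + lam^2/T * g x := by
      linarith
    rw [h2]; ring
  set J : ℝ := ∫ x in Set.Ioi (0:ℝ), φ x * g x with hJ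
  clear_value J
  have hJpp : (∫ x in Set.Ioi (0:ℝ), φ x * deriv (deriv φ) x)
      = lam^2 * P + (lam^2/T) * J := by
    rw [setIntegral_congr_fun measurableSet_Ioi hode,
      integral_add (hφ2.const_mul _) (hφg.const_mul _), integral_const_mul, integral_const_mul,
      hP, hJ]
  rw [hJpp] at hstepA
  -- energy estimate
  have hJle : |J| ≤ (T/2) * P + (1/(2*T)) * A := by
    rw [hJ, hP, hA]; exact integralMulLe hφc hgc hφ2 hg2 hTpos
  have henergy : D + lam^2 * P ≤ lam^2/2 * P + lam^2/(2*T^2) * A := by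
    have e1 : D + lam^2 * P = (lam^2/T) * (-J) := by linarith
    have e2 : (lam^2/T) * (-J) ≤ (lam^2/T) * |J| :=
      mul_le_mul_of_nonneg_left (neg_le_abs J) (by positivity)
    have e3 : (lam^2/T) * ((T/2) * P + (1/(2*T)) * A)
        = lam^2/2 * P + lam^2/(2*T^2) * A := by field_simp
    have e4 : (lam^2/T) * |J| ≤ (lam^2/T) * ((T/2) * P + (1/(2*T)) * A) :=
      mul_le_mul_of_nonneg_left hJle (by positivity)
    linarith
  have hP' : T^2 * P ≤ A := by
    have e0 : lam^2 * P ≤ lam^2 * A / T^2 := by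
      have : lam^2/(2*T^2) * A = (lam^2 * A / T^2)/2 := by ring
      linarith
    have e1 : lam^2 * P * T^2 ≤ lam^2 * A := (le_div_iff₀ (by positivity)).mp e0
    have e2 : lam^2 * (P * T^2) ≤ lam^2 * A := by linarith [e1]
    have := le_of_mul_le_mul_left e2 hl2
    linarith
  have hD' : 2 * T * D ≤ A := by
    have e0 : D ≤ lam^2 * A / (2*T^2) := by
      have : lam^2/(2*T^2) * A = lam^2 * A / (2*T^2) := by ring
      nlinarith [henergy, hl2, hP0]
    have e1 : D * (2*T^2) ≤ lam^2 * A := (le_div_iff₀ (by positivity)).mp e0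
    nlinarith [hA0, hTpos, hD0]
  -- Step B : trace
  have hprod2 : ∀ x, HasDerivAt (fun y => φ y * φ y)
      (deriv φ x * φ x + φ x * deriv φ x) x := fun x =>
    ((hφd x).hasDerivAt).mul ((hφd x).hasDerivAt)
  have hG : IntegrableOn (fun x => φ x * φ x) (Set.Ioi 0) volume :=
    integrableOnMul hφc hφc hφ2 hφ2
  have hG' : IntegrableOn (fun x => deriv φ x * φ x + φ x * deriv φ x) (Set.Ioi 0) volume := by
    have := (integrableOnMul hφ'c hφc hφ'2 hφ2).add hφφ'
    exact this
  have hstepB : (∫ x in Set.Ioi (0:ℝ), (deriv φ x * φ x + φ x * deriv φ x))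
      = -(φ 0 * φ 0) := integralDerivIoi hprod2 hG hG'
  rw [integral_add (integrableOnMul hφ'c hφc hφ'2 hφ2) hφφ'] at hstepB
  have hcomm : (∫ x in Set.Ioi (0:ℝ), deriv φ x * φ x) = ∫ x in Set.Ioi (0:ℝ), φ x * deriv φ x :=
    setIntegral_congr_fun measurableSet_Ioi (fun x _ => mul_comm _ _)
  rw [hcomm] at hstepB
  set J2 : ℝ := ∫ x in Set.Ioi (0:ℝ), φ x * deriv φ x with hJ2
  clear_value J2
  have hJ2le : |J2| ≤ (T/2) * P + (1/(2*T)) * D := by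
    rw [hJ2, hP, hD]; exact integralMulLe hφc hφ'c hφ2 hφ'2 hTpos
  have htr : φ 0 * φ 0 ≤ T * P + (1/T) * D := by
    have e1 : φ 0 * φ 0 = 2 * (-J2) := by linarith
    have e2 : -J2 ≤ |J2| := neg_le_abs J2
    have e3 : (1/(2*T)) * D = (1/T) * D / 2 := by ring
    linarith
  -- combine
  have hfinal : T * (φ 0 * φ 0) ≤ 4 * A := by
    have e1 : T * (φ 0 * φ 0) ≤ T * (T * P + (1/T) * D) :=
      mul_le_mul_of_nonneg_left htr hTpos.le
    have e2 : T * (T * P + (1/T) * D) = T^2 * P + D := by field_simp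
    have e3 : 2*D ≤ 2*T*D := by nlinarith [hD0, hT1]
    linarith [hP', hD', hD0, hT1, hA0]
  have hphisq : (φ 0) ^ 2 ≤ 4 * T⁻¹ * A := by
    have e : (φ 0)^2 * T ≤ 4 * A := by nlinarith [hfinal]
    
    have h5 : (φ 0)^2 ≤ 4 * A / T := (le_div_iff₀ hTpos).mpr e
    calc (φ 0)^2 ≤ 4 * A / T := h5
      _ = 4 * T⁻¹ * A := by ring
  -- finish with rpow algebra
  rw [hAeq]
  have hR0 : 0 ≤ 2 * T ^ (-(1:ℝ)/2) * Real.sqrt A := by positivity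
  have hRsq : (2 * T ^ (-(1:ℝ)/2) * Real.sqrt A) ^ 2 = 4 * T⁻¹ * A := by
    have h1 : (T ^ (-(1:ℝ)/2)) ^ 2 = T⁻¹ := by
      rw [← Real.rpow_natCast (T ^ (-(1:ℝ)/2)) 2, ← Real.rpow_mul hTpos.le]
      norm_num
      exact (Real.rpow_neg_one T)
    rw [mul_pow, mul_pow, h1, Real.sq_sqrt hA0]
    ring
  calc |φ 0| = Real.sqrt ((φ 0)^2) := (Real.sqrt_sq_eq_abs _).symm
    _ ≤ Real.sqrt ((2 * T ^ (-(1:ℝ)/2) * Real.sqrt A) ^ 2) := by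
        apply Real.sqrt_le_sqrt; rw [hRsq]; exact hphisq
    _ = 2 * T ^ (-(1:ℝ)/2) * Real.sqrt A := by rw [Real.sqrt_sq hR0]
end
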